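/- Let {u_n} be a sequence of nondecreasing (with respect to the coordinatewise order) measurable functions on an open bounded convex set X ⊆ ℝ^M such that sup_n ‖u_n‖_{W^{1,1}(ω)} < ∞ for every open convex ω compactly contained in X. Then sup_n ‖u_n‖_{L^∞(ω̄)} < ∞ for every ω compactly contained in X. -/

import Mathlib

open MeasureTheory Metric Set Pointwise

noncomputable def cvec (M : ℕ) (a : ℝ) : EuclideanSpace ℝ (Fin M) := WithLp.toLp 2 (fun _ => a)

lemma cvec_apply (M : ℕ) (a : ℝ) (i : Fin M) : cvec M a i = a := rfl

lemma norm_cvec_le (M : ℕ) (a : ℝ) : ‖cvec M a‖ ≤ Real.sqrt M * |a| := by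
  rw [EuclideanSpace.norm_eq (cvec M a)]
  have h : ∑ i : Fin M, ‖cvec M a i‖ ^ 2 = (M : ℝ) * |a| ^ 2 := by
    simp [cvec_apply, Real.norm_eq_abs, Finset.sum_const, Finset.card_fin]
  rw [h, Real.sqrt_mul (Nat.cast_nonneg _), Real.sqrt_sq_eq_abs, abs_abs]

lemma abs_coord_le_norm {M : ℕ} (x : EuclideanSpace ℝ (Fin M)) (i : Fin M) :
    |x i| ≤ ‖x‖ := by
  rw [EuclideanSpace.norm_eq]
  have h1 : |x i| = Real.sqrt (‖x i‖ ^ 2) := by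
    rw [Real.sqrt_sq_eq_abs]; simp [Real.norm_eq_abs]
  rw [h1]
  exact Real.sqrt_le_sqrt (Finset.single_le_sum (f := fun j => ‖x j‖ ^ 2)
    (fun j _ => sq_nonneg _) (Finset.mem_univ i))

lemma bdd_of_locally_bdd {α : Type*} [TopologicalSpace α] {K : Set α} (hK : IsCompact K)
    (f : α → ℝ) (h : ∀ x ∈ K, ∃ U : Set α, IsOpen U ∧ x ∈ U ∧ ∃ b, ∀ y ∈ U ∩ K, |f y| ≤ b) :
    ∃ b, ∀ y ∈ K, |f y| ≤ b := by
  choose U hUo hxU b hb using h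
  obtain ⟨t, ht⟩ := hK.elim_nhds_subcover' (fun x hx => U x hx)
    (fun x hx => (hUo x hx).mem_nhds (hxU x hx))
  refine ⟨∑ x ∈ t, |b x.1 x.2|, fun y hy => ?_⟩
  obtain ⟨x, hxt, hyU⟩ := Set.mem_iUnion₂.mp (ht hy)
  calc |f y| ≤ b x.1 x.2 := hb x.1 x.2 y ⟨hyU, hy⟩
    _ ≤ |b x.1 x.2| := le_abs_self _
    _ ≤ ∑ x ∈ t, |b x.1 x.2| :=
        Finset.single_le_sum (f := fun z : K => |b z.1 z.2|) (fun z _ => abs_nonneg _) hxt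


/-- Coordinatewise-nondecreasing functions on an open bounded convex set whose
`W^{1,1}` norms are locally uniformly bounded are locally uniformly bounded in `L^∞`. -/
theorem locally_bounded_of_monotone_W11 {M : ℕ}
    (X : Set (EuclideanSpace ℝ (Fin M)))
    (hXopen : IsOpen X) (hXconv : Convex ℝ X) (hXbdd : Bornology.IsBounded X)
    (u : ℕ → EuclideanSpace ℝ (Fin M) → ℝ)
    (hmeas : ∀ n, Measurable (u n))
    (hmono : ∀ n, ∀ x ∈ X, ∀ x' ∈ X, (∀ i, x' i ≤ x i) → u n x' ≤ u n x)
    (hW : ∀ ω : Set (EuclideanSpace ℝ (Fin M)), IsOpen ω → Convex ℝ ω → closure ω ⊆ X →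
      ∃ C : ℝ, ∀ n,
        (∫ x in ω, |u n x|) + (∫ x in ω, ‖fderiv ℝ (u n) x‖) ≤ C) :
    ∀ ω : Set (EuclideanSpace ℝ (Fin M)), closure ω ⊆ X →
      ∃ C : ℝ, ∀ n, ∀ x ∈ closure ω, |u n x| ≤ C := by
  intro ω hω
  classical
  set s : ℝ := Real.sqrt M with hs_def
  have hs : 0 ≤ s := Real.sqrt_nonneg _
  set K : Set (EuclideanSpace ℝ (Fin M)) := convexHull ℝ (closure ω) with hK
  have hωcl : closure ω ⊆ K := subset_convexHull ℝ _
  have hωcomp : IsCompact (closure ω) :=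
    Metric.isCompact_of_isClosed_isBounded isClosed_closure (hXbdd.subset hω)
  -- small thickening of `closure ω` inside `X`
  obtain ⟨ε, hε, hthick⟩ := hωcomp.exists_thickening_subset_open hXopen hω
  -- the thickening of the convex hull stays inside `X`
  have hthickK : Metric.thickening ε K ⊆ X := by
    have h1 : Metric.thickening ε K = K + ball 0 ε := (add_ball_zero ε K).symm
    have h2 : K + ball 0 ε ⊆ convexHull ℝ (closure ω + ball 0 ε) := by
      rw [convexHull_add]
      exact Set.add_subset_add_left (subset_convexHull ℝ _)
    have h3 : closure ω + ball 0 ε = Metric.thickening ε (closure ω) :=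
      add_ball_zero ε (closure ω)
    rw [h1]
    refine h2.trans ?_
    rw [h3]
    exact convexHull_min hthick hXconv
  set ω' := Metric.thickening (ε / 2) K with hω'def
  have hω'X : ω' ⊆ X :=
    (Metric.thickening_mono (by linarith) K).trans hthickK
  have hω'open : IsOpen ω' := Metric.isOpen_thickening
  have hω'cl : closure ω' ⊆ X := by
    refine subset_trans ?_ hthickK
    exact (Metric.closure_thickening_subset_cthickening _ _).trans
      (Metric.cthickening_subset_thickening' hε (by linarith) K)
  obtain ⟨C, hC⟩ := hW ω' hω'open ((convex_convexHull ℝ _).thickening _) hω'cl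
  have hω'bdd : Bornology.IsBounded ω' := hXbdd.subset hω'X
  have hμω' : volume ω' ≠ ⊤ := hω'bdd.measure_lt_top.ne
  have hCint : ∀ n, (∫ x in ω', |u n x|) ≤ C := by
    intro n
    have h2 : 0 ≤ ∫ x in ω', ‖fderiv ℝ (u n) x‖ :=
      integral_nonneg fun x => norm_nonneg _
    linarith [hC n]
  -- integrability of |u n| on ω'
  have hInt : ∀ n, IntegrableOn (fun z => |u n z|) ω' volume := by
    intro n
    have hcomp' : IsCompact (closure ω') :=
      Metric.isCompact_of_isClosed_isBounded isClosed_closure (hXbdd.subset hω'cl)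
    have hbd : ∃ b, ∀ z ∈ closure ω', |u n z| ≤ b := by
      refine bdd_of_locally_bdd hcomp' (u n) (fun x hx => ?_)
      obtain ⟨r, hr, hball⟩ := Metric.isOpen_iff.mp hXopen x (hω'cl hx)
      set d : ℝ := r / (2 * (s + 1)) with hd_def
      have hd : 0 < d := by positivity
      have hsd : s * d < r := by
        have : d * (2 * (s + 1)) = r := by rw [hd_def, div_mul_cancel₀]; positivity
        nlinarith
      have hp : x + cvec M d ∈ X := by
        apply hball
        rw [mem_ball, dist_eq_norm, add_sub_cancel_left]
        calc ‖cvec M d‖ ≤ s * |d| := norm_cvec_le M d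
          _ = s * d := by rw [abs_of_pos hd]
          _ < r := hsd
      have hq : x + cvec M (-d) ∈ X := by
        apply hball
        rw [mem_ball, dist_eq_norm, add_sub_cancel_left]
        calc ‖cvec M (-d)‖ ≤ s * |(-d)| := norm_cvec_le M (-d)
          _ = s * d := by rw [abs_neg, abs_of_pos hd]
          _ < r := hsd
      refine ⟨ball x d, isOpen_ball, mem_ball_self hd,
        |u n (x + cvec M d)| + |u n (x + cvec M (-d))|, fun y hy => ?_⟩
      have hyX : y ∈ X := hω'cl hy.2
      have hyc : ∀ i, |y i - x i| < d := by
        intro i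
        have h1 : |(y - x) i| ≤ ‖y - x‖ := abs_coord_le_norm _ i
        have h2 : ‖y - x‖ < d := by rw [← dist_eq_norm]; exact hy.1
        simpa [PiLp.sub_apply] using h1.trans_lt h2
      have hup : u n y ≤ u n (x + cvec M d) := by
        refine hmono n _ hp y hyX (fun i => ?_)
        have := (abs_lt.mp (hyc i)).2
        simp only [PiLp.add_apply, cvec_apply]
        linarith
      have hdown : u n (x + cvec M (-d)) ≤ u n y := by
        refine hmono n y hyX _ hq (fun i => ?_)
        have := (abs_lt.mp (hyc i)).1
        simp only [PiLp.add_apply, cvec_apply]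
        linarith
      rw [abs_le]
      constructor
      · have := neg_abs_le (u n (x + cvec M (-d)))
        have h0 : (0:ℝ) ≤ |u n (x + cvec M d)| := abs_nonneg _
        linarith
      · have := le_abs_self (u n (x + cvec M d))
        have h0 : (0:ℝ) ≤ |u n (x + cvec M (-d))| := abs_nonneg _
        linarith
    obtain ⟨b, hb⟩ := hbd
    refine Measure.integrableOn_of_bounded (M := b) hμω' ((hmeas n).abs.aestronglyMeasurable) ?_
    refine ae_restrict_of_forall_mem hω'open.measurableSet (fun z hz => ?_)
    rw [Real.norm_eq_abs, abs_abs]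
    exact hb z (subset_closure hz)
  -- the small radius
  set δ : ℝ := ε / (8 * (s + 1)) with hδ_def
  have hδ : 0 < δ := by positivity
  set κ : ℝ := (volume (ball (0 : EuclideanSpace ℝ (Fin M)) (δ / 2))).toReal with hκ_def
  have hκ : 0 < κ := by
    rw [hκ_def]
    exact ENNReal.toReal_pos (measure_ball_pos _ _ (by positivity)).ne'
      measure_ball_lt_top.ne
  refine ⟨C / κ, fun n y hy => ?_⟩
  have hyX : y ∈ X := hω hy
  -- the two candidate balls are inside ω'
  have hballsub : ∀ a : ℝ, |a| = 3 * δ / 2 →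
      ball (y + cvec M a) (δ / 2) ⊆ ω' := by
    intro a ha z hz
    have h1 : ‖z - y‖ < ε / 2 := by
      have h2 : ‖z - (y + cvec M a)‖ < δ / 2 := by
        rw [← dist_eq_norm]; exact hz
      have h3 : ‖cvec M a‖ ≤ s * (3 * δ / 2) := by
        have := norm_cvec_le M a
        rwa [ha] at this
      have h4 : ‖z - y‖ ≤ ‖z - (y + cvec M a)‖ + ‖cvec M a‖ := by
        have : z - y = (z - (y + cvec M a)) + cvec M a := by abel
        rw [this]; exact norm_add_le _ _
      have hde : δ * (8 * (s + 1)) = ε := by rw [hδ_def, div_mul_cancel₀]; positivity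
      nlinarith
    have : z ∈ ball y (ε / 2) := by rw [mem_ball, dist_eq_norm]; exact h1
    exact Metric.ball_subset_thickening (hωcl hy) (ε / 2) this
  -- choose the ball above or below y depending on the sign of u n y
  have key : ∃ c : EuclideanSpace ℝ (Fin M), ball c (δ / 2) ⊆ ω' ∧
      ∀ z ∈ ball c (δ / 2), |u n y| ≤ |u n z| := by
    rcases le_or_gt 0 (u n y) with h0 | h0
    · refine ⟨y + cvec M (3 * δ / 2), hballsub _ (abs_of_pos (by positivity)), fun z hz => ?_⟩
      have hzω' : z ∈ ω' := hballsub _ (abs_of_pos (by positivity)) hz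
      have hcoord : ∀ i, y i ≤ z i := by
        intro i
        have h1 : |(z - (y + cvec M (3 * δ / 2))) i| ≤ ‖z - (y + cvec M (3 * δ / 2))‖ :=
          abs_coord_le_norm _ i
        have h2 : ‖z - (y + cvec M (3 * δ / 2))‖ < δ / 2 := by
          rw [← dist_eq_norm]; exact hz
        have h3 := (abs_lt.mp (h1.trans_lt h2)).1
        simp only [PiLp.sub_apply, PiLp.add_apply, cvec_apply] at h3
        linarith
      have := hmono n z (hω'X hzω') y hyX hcoord
      rw [abs_of_nonneg h0]
      exact this.trans (le_abs_self _)
    · refine ⟨y + cvec M (-(3 * δ / 2)), hballsub _ (by rw [abs_neg]; exact abs_of_pos (by positivity)), fun z hz => ?_⟩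
      have hzω' : z ∈ ω' := hballsub _ (by rw [abs_neg]; exact abs_of_pos (by positivity)) hz
      have hcoord : ∀ i, z i ≤ y i := by
        intro i
        have h1 : |(z - (y + cvec M (-(3 * δ / 2)))) i| ≤ ‖z - (y + cvec M (-(3 * δ / 2)))‖ :=
          abs_coord_le_norm _ i
        have h2 : ‖z - (y + cvec M (-(3 * δ / 2)))‖ < δ / 2 := by
          rw [← dist_eq_norm]; exact hz
        have h3 := (abs_lt.mp (h1.trans_lt h2)).2
        simp only [PiLp.sub_apply, PiLp.add_apply, cvec_apply] at h3
        linarith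
      have hle := hmono n y hyX z (hω'X hzω') hcoord
      have : u n z ≤ 0 := hle.trans h0.le
      rw [abs_of_neg h0, abs_of_nonpos this]
      linarith
  obtain ⟨c, hsub, hle⟩ := key
  have hμB : volume (ball c (δ / 2)) = volume (ball (0 : EuclideanSpace ℝ (Fin M)) (δ / 2)) :=
    Measure.addHaar_ball_center _ _ _
  have hμBne : volume (ball c (δ / 2)) ≠ ⊤ := measure_ball_lt_top.ne
  have h1 : |u n y| * κ ≤ ∫ z in ball c (δ / 2), |u n z| := by
    have := setIntegral_ge_of_const_le_real (f := fun z => |u n z|) (c := |u n y|)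
      measurableSet_ball hμBne hle ((hInt n).mono_set hsub)
    rw [measureReal_def, hμB, ← hκ_def] at this
    linarith
  have h2 : (∫ z in ball c (δ / 2), |u n z|) ≤ ∫ z in ω', |u n z| := by
    refine setIntegral_mono_set (hInt n) ?_ (HasSubset.Subset.eventuallyLE hsub)
    exact Filter.Eventually.of_forall fun z => abs_nonneg _
  have h3 : |u n y| * κ ≤ C := h1.trans (h2.trans (hCint n))
  rw [le_div_iff₀ hκ]
  exact h3
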